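/- arXiv:1808.06961 — 4 statements merged into one kernel-verified Lean document; each statement's English description precedes it below -/
import Mathlib

section
/- Under the null-hypothesis model, the expected spread of experiment E1 is zero: for every ranking distribution r on the permutations of Fin n and every pair of distinct objects a ≠ b, if σ₁, σ₂, σ₃ are independent samples from r, then the expectation of the object-based spread (σ₁(c) − σ₃(c)) + (σ₃(d) − σ₁(d)) — where c = a if σ₂(a) < σ₂(b) and c = b otherwise, and d is the non-chosen object — equals 0. Equivalently, ∑_{σ₁,σ₂,σ₃ ∈ S_n} r(σ₁)·r(σ₂)·r(σ₃)·spread(σ₁,σ₂,σ₃) = 0. -/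
/-- Object-based spread: given distinct comparison objects `a`, `b`, the subject
chooses `c = a` if `σ₂ a < σ₂ b` and `c = b` otherwise (with `d` the other object);
the spread is the amount the chosen object's rank improves plus the amount the
rejected object's rank worsens between the stage-one and stage-three rankings. -/
def objSpread {n : ℕ} (a b : Fin n) (σ₁ σ₂ σ₃ : Equiv.Perm (Fin n)) : ℤ :=
  let c := if σ₂ a < σ₂ b then a else b
  let d := if σ₂ a < σ₂ b then b else a
  (((σ₁ c).val : ℤ) - ((σ₃ c).val : ℤ)) + (((σ₃ d).val : ℤ) - ((σ₁ d).val : ℤ))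

/-- Under the null-hypothesis model, the expected spread of experiment E1
(fixed pre-selected pair of comparison objects) is zero. -/
theorem expected_spread_E1_eq_zero (n : ℕ) (r : Equiv.Perm (Fin n) → ℝ)
    (hr_nonneg : ∀ σ, 0 ≤ r σ) (hr_sum : ∑ σ : Equiv.Perm (Fin n), r σ = 1)
    (a b : Fin n) (hab : a ≠ b) :
    ∑ σ₁ : Equiv.Perm (Fin n), ∑ σ₂ : Equiv.Perm (Fin n), ∑ σ₃ : Equiv.Perm (Fin n),
      r σ₁ * r σ₂ * r σ₃ * ((objSpread a b σ₁ σ₂ σ₃ : ℤ) : ℝ) = 0 := by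
  rw [Finset.sum_comm]
  refine Finset.sum_eq_zero fun σ₂ _ => ?_
  set c := if σ₂ a < σ₂ b then a else b with hc
  set d := if σ₂ a < σ₂ b then b else a with hd
  have hA : ∀ σ₁ σ₃ : Equiv.Perm (Fin n),
      r σ₁ * r σ₂ * r σ₃ * ((objSpread a b σ₁ σ₂ σ₃ : ℤ) : ℝ)
      = r σ₂ * ((r σ₁ * (((σ₁ c).val : ℝ) - ((σ₁ d).val : ℝ))) * r σ₃
        - r σ₁ * (r σ₃ * (((σ₃ c).val : ℝ) - ((σ₃ d).val : ℝ)))) := by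
    intro σ₁ σ₃
    simp only [objSpread, ← hc, ← hd]
    push_cast
    ring
  simp only [hA, ← Finset.mul_sum, Finset.sum_sub_distrib, ← Finset.sum_mul, hr_sum]
  simp
end

section
/- Under the null-hypothesis model, the expected spread of experiment E2 is zero: for every ranking distribution r on the permutations of Fin n (n ≥ 2), if σ₁, σ₂, σ₃ are independent samples from r and the pair of comparison positions {i, j} (with i < j) is chosen uniformly at random from all n(n−1)/2 unordered pairs of positions, independently of (σ₁, σ₂, σ₃), then the expectation of the position-based spread is zero. Equivalently, (2/(n(n−1))) · ∑_{1 ≤ i < j ≤ n} ∑_{σ₁,σ₂,σ₃} r(σ₁)·r(σ₂)·r(σ₃)·spread_{i,j}(σ₁,σ₂,σ₃) = 0. -/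
/-- Position-based spread: given comparison positions `i`, `j`, the comparison
objects are `a = σ₁⁻¹ i` and `b = σ₁⁻¹ j`; the subject chooses whichever of
`a`, `b` is ranked better (lower) by `σ₂`, and the spread is the amount the
chosen object's rank improves plus the amount the rejected object's rank
worsens between the stage-one ranking `σ₁` and the stage-three ranking `σ₃`. -/
def posSpread {n : ℕ} (i j : Fin n) (σ₁ σ₂ σ₃ : Equiv.Perm (Fin n)) : ℤ :=
  let a := σ₁⁻¹ i
  let b := σ₁⁻¹ j
  let c := if σ₂ a < σ₂ b then a else b
  let d := if σ₂ a < σ₂ b then b else a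
  (((σ₁ c).val : ℤ) - ((σ₃ c).val : ℤ)) + (((σ₃ d).val : ℤ) - ((σ₁ d).val : ℤ))

lemma posSpread_cancel {n : ℕ} (i j : Fin n) (hij : i ≠ j) (σ₁ σ₂ σ₃ : Equiv.Perm (Fin n)) :
    posSpread i j σ₁ σ₂ σ₃ +
      posSpread (if σ₃ (σ₁⁻¹ i) < σ₃ (σ₁⁻¹ j) then σ₃ (σ₁⁻¹ i) else σ₃ (σ₁⁻¹ j))
        (if σ₃ (σ₁⁻¹ i) < σ₃ (σ₁⁻¹ j) then σ₃ (σ₁⁻¹ j) else σ₃ (σ₁⁻¹ i)) σ₃ σ₂ σ₁ = 0 := by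
  set a := σ₁⁻¹ i with ha
  set b := σ₁⁻¹ j with hb
  have hab : a ≠ b := fun h => hij (by
    have := congrArg σ₁ h
    simpa [ha, hb, Equiv.Perm.coe_inv, Equiv.apply_symm_apply] using this)
  have h2 : σ₂ a ≠ σ₂ b := fun h => hab (σ₂.injective h)
  have h3 : σ₃ a ≠ σ₃ b := fun h => hab (σ₃.injective h)
  by_cases hc : σ₃ a < σ₃ b
  · simp only [if_pos hc, posSpread]
    simp only [Equiv.Perm.coe_inv, Equiv.symm_apply_apply, ← ha, ← hb]
    by_cases h : σ₂ a < σ₂ b <;> simp only [if_pos, if_neg, h, if_true, if_false] <;> ring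
  · simp only [if_neg hc, posSpread]
    simp only [Equiv.Perm.coe_inv, Equiv.symm_apply_apply, ← ha, ← hb]
    rcases lt_or_gt_of_ne h2 with h | h
    · simp only [if_pos h, if_neg (asymm h)]
      ring
    · simp only [if_neg (asymm h), if_pos h]
      ring

lemma posSpread_self {n : ℕ} (i j : Fin n) (σ₁ σ₂ : Equiv.Perm (Fin n)) :
    posSpread i j σ₁ σ₂ σ₁ = 0 := by
  unfold posSpread
  by_cases h : σ₂ (σ₁⁻¹ i) < σ₂ (σ₁⁻¹ j) <;> simp [h] <;> ring

/-- The involution on the index set used to cancel the sum. -/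
def spreadInv {n : ℕ} (x : (Fin n × Fin n) × Equiv.Perm (Fin n) × Equiv.Perm (Fin n) × Equiv.Perm (Fin n)) :
    (Fin n × Fin n) × Equiv.Perm (Fin n) × Equiv.Perm (Fin n) × Equiv.Perm (Fin n) :=
  let i := x.1.1; let j := x.1.2
  let σ₁ := x.2.1; let σ₂ := x.2.2.1; let σ₃ := x.2.2.2
  ((if σ₃ (σ₁⁻¹ i) < σ₃ (σ₁⁻¹ j) then σ₃ (σ₁⁻¹ i) else σ₃ (σ₁⁻¹ j),
    if σ₃ (σ₁⁻¹ i) < σ₃ (σ₁⁻¹ j) then σ₃ (σ₁⁻¹ j) else σ₃ (σ₁⁻¹ i)), σ₃, σ₂, σ₁)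

lemma spread_sum_zero {n : ℕ} (r : Equiv.Perm (Fin n) → ℝ) :
    ∑ x ∈ (Finset.univ.filter (fun p : Fin n × Fin n => p.1 < p.2)) ×ˢ
        (Finset.univ : Finset (Equiv.Perm (Fin n) × Equiv.Perm (Fin n) × Equiv.Perm (Fin n))),
      r x.2.1 * r x.2.2.1 * r x.2.2.2 * ((posSpread x.1.1 x.1.2 x.2.1 x.2.2.1 x.2.2.2 : ℤ) : ℝ)
      = 0 := by
  apply Finset.sum_involution (fun x _ => spreadInv x)
  · -- cancellation
    rintro ⟨⟨i, j⟩, σ₁, σ₂, σ₃⟩ hx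
    simp only [Finset.mem_product, Finset.mem_filter, Finset.mem_univ, true_and] at hx
    have hij : i ≠ j := ne_of_lt hx.1
    have hc := posSpread_cancel i j hij σ₁ σ₂ σ₃
    have hcr : ((posSpread i j σ₁ σ₂ σ₃ : ℤ) : ℝ) +
        ((posSpread (if σ₃ (σ₁⁻¹ i) < σ₃ (σ₁⁻¹ j) then σ₃ (σ₁⁻¹ i) else σ₃ (σ₁⁻¹ j))
          (if σ₃ (σ₁⁻¹ i) < σ₃ (σ₁⁻¹ j) then σ₃ (σ₁⁻¹ j) else σ₃ (σ₁⁻¹ i)) σ₃ σ₂ σ₁ : ℤ) : ℝ) = 0 := by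
      exact_mod_cast congrArg (fun z : ℤ => (z : ℝ)) hc
    simp only [spreadInv]
    linear_combination (r σ₁ * r σ₂ * r σ₃) * hcr
  · -- nontrivial on nonzero terms (via: fixed points have zero term)
    rintro ⟨⟨i, j⟩, σ₁, σ₂, σ₃⟩ hx hne heq
    apply hne
    have h31 : σ₁ = σ₃ := congrArg (fun y => y.2.2.2) heq
    rw [← h31, posSpread_self]
    simp
  · -- maps into the set
    rintro ⟨⟨i, j⟩, σ₁, σ₂, σ₃⟩ hx
    simp only [Finset.mem_product, Finset.mem_filter, Finset.mem_univ, true_and, and_true] at hx ⊢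
    have hij : i ≠ j := ne_of_lt hx
    have hab : σ₁⁻¹ i ≠ σ₁⁻¹ j := fun h => hij (by
      have := congrArg σ₁ h
      simpa [Equiv.Perm.coe_inv, Equiv.apply_symm_apply] using this)
    have h3 : σ₃ (σ₁⁻¹ i) ≠ σ₃ (σ₁⁻¹ j) := fun h => hab (σ₃.injective h)
    simp only [spreadInv]
    by_cases hc : σ₃ (σ₁⁻¹ i) < σ₃ (σ₁⁻¹ j)
    · simpa [hc, -Equiv.Perm.coe_inv] using hc
    · simp only [hc, if_false]
      exact lt_of_le_of_ne (not_lt.mp hc) (Ne.symm h3)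
  · -- involution
    rintro ⟨⟨i, j⟩, σ₁, σ₂, σ₃⟩ hx
    simp only [Finset.mem_product, Finset.mem_filter, Finset.mem_univ, true_and, and_true] at hx
    have hab : σ₁⁻¹ i ≠ σ₁⁻¹ j := fun h => ne_of_lt hx (by
      have := congrArg σ₁ h
      simpa [Equiv.Perm.coe_inv, Equiv.apply_symm_apply] using this)
    have h3 : σ₃ (σ₁⁻¹ i) ≠ σ₃ (σ₁⁻¹ j) := fun h => hab (σ₃.injective h)
    simp only [spreadInv]
    by_cases hc : σ₃ (σ₁⁻¹ i) < σ₃ (σ₁⁻¹ j)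
    · simp only [hc, if_true]; simp only [Equiv.Perm.coe_inv, Equiv.symm_apply_apply, Equiv.Perm.coe_inv, Equiv.apply_symm_apply]
      simp [Equiv.Perm.coe_inv, Equiv.apply_symm_apply, hx, not_lt_of_gt hx, Prod.ext_iff]
    · simp only [hc, if_false]; simp only [Equiv.Perm.coe_inv, Equiv.symm_apply_apply, Equiv.Perm.coe_inv, Equiv.apply_symm_apply]
      simp [Equiv.Perm.coe_inv, Equiv.apply_symm_apply, hx, not_lt_of_gt hx, Prod.ext_iff]

/-- Under the null-hypothesis model, the expected spread of experiment E2
(comparison positions chosen uniformly at random, independently of the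
rankings) is zero. -/
theorem expected_spread_E2_eq_zero (n : ℕ) (hn : 2 ≤ n)
    (r : Equiv.Perm (Fin n) → ℝ)
    (hr_nonneg : ∀ σ, 0 ≤ r σ) (hr_sum : ∑ σ : Equiv.Perm (Fin n), r σ = 1) :
    (2 / ((n : ℝ) * ((n : ℝ) - 1))) *
      ∑ p ∈ Finset.univ.filter (fun p : Fin n × Fin n => p.1 < p.2),
        ∑ σ₁ : Equiv.Perm (Fin n), ∑ σ₂ : Equiv.Perm (Fin n), ∑ σ₃ : Equiv.Perm (Fin n),
          r σ₁ * r σ₂ * r σ₃ * ((posSpread p.1 p.2 σ₁ σ₂ σ₃ : ℤ) : ℝ) = 0 := by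
  have key := spread_sum_zero r
  rw [Finset.sum_product] at key
  simp only [Fintype.sum_prod_type] at key
  rw [key, mul_zero]
end

section
/- Under the null-hypothesis model, the expected average spread of experiment E3 is zero: let n ≥ 2, let m = n(n−1)/2, let e : Fin m → {unordered pairs {i,j} of distinct positions in Fin n} be a bijection enumerating all comparison-position pairs, and let each subject k ∈ Fin m have its own ranking distribution r_k on the permutations of Fin n. Suppose subjects are assigned to pairs by a uniformly random permutation π of Fin m, and subject k's three rankings σ₁, σ₂, σ₃ are independent samples from r_k, with subject k's spread computed at the pair e(π(k)). Then the expected average spread, (1/m!) · ∑_{π ∈ S_m} (1/m) · ∑_{k} E_{r_k}[spread_{e(π(k))}(σ₁,σ₂,σ₃)], equals zero. -/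
open Finset

lemma pair_sum {n : ℕ} (σ₁ σ₂ σ₃ : Equiv.Perm (Fin n)) :
    ∑ p : {p : Fin n × Fin n // p.1 < p.2},
        posSpread p.1.1 p.1.2 σ₁ σ₂ σ₃
      = ∑ x : Fin n, (((σ₁ x : ℤ) - (σ₃ x : ℤ)) *
          (((univ.filter fun b => σ₂ x < σ₂ b).card : ℤ)
            - ((univ.filter fun a => σ₂ a < σ₂ x).card : ℤ))) := by
  set f : Fin n → ℤ := fun x => ((σ₁ x : ℤ) - (σ₃ x : ℤ)) with hf
  set G : Fin n → Fin n → ℤ := fun a b => if σ₂ a < σ₂ b then f a - f b else 0 with hG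
  set H : Fin n × Fin n → ℤ := fun p => G (σ₁⁻¹ p.1) (σ₁⁻¹ p.2) with hH
  have hspread : ∀ i j : Fin n, i ≠ j →
      posSpread i j σ₁ σ₂ σ₃ = H (i, j) + H (j, i) := by
    intro i j hij
    have hab : σ₁⁻¹ i ≠ σ₁⁻¹ j := fun h => hij (by
      have := congrArg σ₁ h; simpa using this)
    have h2 : σ₂ (σ₁⁻¹ i) ≠ σ₂ (σ₁⁻¹ j) := fun h => hab (σ₂.injective h)
    rcases lt_or_gt_of_ne h2 with h | h
    · simp only [posSpread, H, G, hf]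
      rw [if_pos h, if_pos h, if_pos h, if_neg (asymm h)]
      ring
    · simp only [posSpread, H, G, hf]
      rw [if_neg (asymm h), if_neg (asymm h), if_neg (asymm h), if_pos h]
      ring
  -- sum over subtype = sum over filter
  have hsub : (∑ p : {p : Fin n × Fin n // p.1 < p.2}, posSpread p.1.1 p.1.2 σ₁ σ₂ σ₃)
      = ∑ p ∈ univ.filter (fun p : Fin n × Fin n => p.1 < p.2),
          posSpread p.1 p.2 σ₁ σ₂ σ₃ :=
    (Finset.sum_subtype (univ.filter (fun p : Fin n × Fin n => p.1 < p.2))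
      (fun x => by simp) (fun p => posSpread p.1 p.2 σ₁ σ₂ σ₃)).symm
  rw [hsub]
  have h1 : ∑ p ∈ univ.filter (fun p : Fin n × Fin n => p.1 < p.2),
      posSpread p.1 p.2 σ₁ σ₂ σ₃
      = ∑ p ∈ univ.filter (fun p : Fin n × Fin n => p.1 < p.2), (H p + H p.swap) := by
    refine Finset.sum_congr rfl fun p hp => ?_
    have : p.1 < p.2 := (Finset.mem_filter.1 hp).2
    exact hspread p.1 p.2 (ne_of_lt this)
  rw [h1, Finset.sum_add_distrib]
  have hswap : ∑ p ∈ univ.filter (fun p : Fin n × Fin n => p.1 < p.2), H p.swap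
      = ∑ p ∈ univ.filter (fun p : Fin n × Fin n => p.2 < p.1), H p := by
    refine Finset.sum_nbij' (fun p => p.swap) (fun p => p.swap) ?_ ?_ ?_ ?_ ?_
    · intro p hp; simp at hp ⊢; exact hp
    · intro p hp; simp at hp ⊢; exact hp
    · intro p _; simp
    · intro p _; simp
    · intro p _; rfl
  rw [hswap]
  have hdiagzero : ∀ x : Fin n, H (x, x) = 0 := by
    intro x; simp [H, G]
  have hfull : ∑ p ∈ (univ : Finset (Fin n × Fin n)), H p
      = ∑ p ∈ univ.filter (fun p : Fin n × Fin n => p.1 < p.2), H p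
        + ∑ p ∈ univ.filter (fun p : Fin n × Fin n => p.2 < p.1), H p := by
    rw [← Finset.sum_filter_add_sum_filter_not univ (fun p : Fin n × Fin n => p.1 < p.2) H]
    congr 1
    rw [← Finset.sum_filter_add_sum_filter_not
        (univ.filter (fun p : Fin n × Fin n => ¬ p.1 < p.2)) (fun p => p.2 < p.1) H]
    have e1 : (univ.filter (fun p : Fin n × Fin n => ¬ p.1 < p.2)).filter
        (fun p => p.2 < p.1) = univ.filter (fun p : Fin n × Fin n => p.2 < p.1) := by
      ext p
      simp only [Finset.mem_filter, Finset.mem_univ, true_and]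
      constructor
      · rintro ⟨_, h⟩; exact h
      · intro h; exact ⟨asymm h, h⟩
    have e2 : ∑ p ∈ (univ.filter (fun p : Fin n × Fin n => ¬ p.1 < p.2)).filter
        (fun p => ¬ p.2 < p.1), H p = 0 := by
      refine Finset.sum_eq_zero fun p hp => ?_
      simp only [Finset.mem_filter] at hp
      have : p.1 = p.2 := le_antisymm (not_lt.1 hp.2) (not_lt.1 hp.1.2)
      have hp2 : p = (p.1, p.1) := by
        cases p; simp_all
      rw [hp2]; exact hdiagzero _
    rw [e1, e2, add_zero]
  have hstep : ∑ p ∈ univ.filter (fun p : Fin n × Fin n => p.1 < p.2), H p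
        + ∑ p ∈ univ.filter (fun p : Fin n × Fin n => p.2 < p.1), H p
      = ∑ a : Fin n, ∑ b : Fin n, G a b := by
    rw [← hfull]
    rw [show ∑ p ∈ (univ : Finset (Fin n × Fin n)), H p = ∑ p : Fin n × Fin n, H p from rfl]
    rw [Fintype.sum_prod_type]
    rw [← Equiv.sum_comp (σ₁⁻¹ : Equiv.Perm (Fin n)) (fun a => ∑ b : Fin n, G a b)]
    refine Finset.sum_congr rfl fun i _ => ?_
    rw [← Equiv.sum_comp (σ₁⁻¹ : Equiv.Perm (Fin n)) (fun b => G (σ₁⁻¹ i) b)]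
  rw [hstep]
  -- now compute the double sum
  have hGsplit : ∀ a b : Fin n, G a b
      = (if σ₂ a < σ₂ b then f a else 0) - (if σ₂ a < σ₂ b then f b else 0) := by
    intro a b; simp only [G]; split <;> simp
  simp only [hGsplit]
  rw [Finset.sum_congr rfl fun a _ => Finset.sum_sub_distrib _ _, Finset.sum_sub_distrib]
  have hA : ∑ a : Fin n, ∑ b : Fin n, (if σ₂ a < σ₂ b then f a else 0)
      = ∑ a : Fin n, f a * ((univ.filter fun b => σ₂ a < σ₂ b).card : ℤ) := by
    refine Finset.sum_congr rfl fun a _ => ?_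
    rw [← Finset.sum_filter, Finset.sum_const, nsmul_eq_mul, mul_comm]
  have hB : ∑ a : Fin n, ∑ b : Fin n, (if σ₂ a < σ₂ b then f b else 0)
      = ∑ b : Fin n, f b * ((univ.filter fun a => σ₂ a < σ₂ b).card : ℤ) := by
    rw [Finset.sum_comm]
    refine Finset.sum_congr rfl fun b _ => ?_
    rw [← Finset.sum_filter, Finset.sum_const, nsmul_eq_mul, mul_comm]
  rw [hA, hB, ← Finset.sum_sub_distrib]
  refine Finset.sum_congr rfl fun x _ => ?_
  ring

lemma key {n : ℕ} (w : Equiv.Perm (Fin n) → ℝ) (hw : ∑ σ : Equiv.Perm (Fin n), w σ = 1) :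
    ∑ p : {p : Fin n × Fin n // p.1 < p.2},
      ∑ σ₁ : Equiv.Perm (Fin n), ∑ σ₂ : Equiv.Perm (Fin n), ∑ σ₃ : Equiv.Perm (Fin n),
        w σ₁ * w σ₂ * w σ₃ * ((posSpread p.1.1 p.1.2 σ₁ σ₂ σ₃ : ℤ) : ℝ) = 0 := by
  set C : Equiv.Perm (Fin n) → Fin n → ℝ := fun σ₂ x =>
    (((univ.filter fun b => σ₂ x < σ₂ b).card : ℤ)
      - ((univ.filter fun a => σ₂ a < σ₂ x).card : ℤ) : ℤ) with hC
  -- move the pair sum to the innermost position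
  have h1 : ∑ p : {p : Fin n × Fin n // p.1 < p.2},
      ∑ σ₁ : Equiv.Perm (Fin n), ∑ σ₂ : Equiv.Perm (Fin n), ∑ σ₃ : Equiv.Perm (Fin n),
        w σ₁ * w σ₂ * w σ₃ * ((posSpread p.1.1 p.1.2 σ₁ σ₂ σ₃ : ℤ) : ℝ)
      = ∑ σ₁ : Equiv.Perm (Fin n), ∑ σ₂ : Equiv.Perm (Fin n), ∑ σ₃ : Equiv.Perm (Fin n),
        w σ₁ * w σ₂ * w σ₃ * ∑ x : Fin n, ((σ₁ x : ℝ) - (σ₃ x : ℝ)) * C σ₂ x := by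
    rw [Finset.sum_comm]
    refine Finset.sum_congr rfl fun σ₁ _ => ?_
    rw [Finset.sum_comm]
    refine Finset.sum_congr rfl fun σ₂ _ => ?_
    rw [Finset.sum_comm]
    refine Finset.sum_congr rfl fun σ₃ _ => ?_
    rw [← Finset.mul_sum]
    congr 1
    rw [show ∑ p : {p : Fin n × Fin n // p.1 < p.2}, ((posSpread p.1.1 p.1.2 σ₁ σ₂ σ₃ : ℤ) : ℝ)
        = ((∑ p : {p : Fin n × Fin n // p.1 < p.2}, posSpread p.1.1 p.1.2 σ₁ σ₂ σ₃ : ℤ) : ℝ) by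
      push_cast; rfl]
    rw [pair_sum σ₁ σ₂ σ₃]
    push_cast [hC]
    rfl
  rw [h1, Finset.sum_comm]
  refine Finset.sum_eq_zero fun σ₂ _ => ?_
  set P : Equiv.Perm (Fin n) → ℝ := fun σ => ∑ x : Fin n, (w σ * (σ x : ℝ)) * C σ₂ x with hP
  have h2 : ∀ σ₁ σ₃ : Equiv.Perm (Fin n),
      w σ₁ * w σ₂ * w σ₃ * ∑ x : Fin n, ((σ₁ x : ℝ) - (σ₃ x : ℝ)) * C σ₂ x
      = w σ₂ * (P σ₁ * w σ₃ - w σ₁ * P σ₃) := by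
    intro σ₁ σ₃
    simp only [hP]
    rw [Finset.mul_sum]
    conv_rhs => rw [Finset.sum_mul, Finset.mul_sum, ← Finset.sum_sub_distrib, Finset.mul_sum]
    exact Finset.sum_congr rfl fun x _ => by ring
  simp only [h2]
  have h3 : ∀ σ₁ : Equiv.Perm (Fin n),
      ∑ σ₃ : Equiv.Perm (Fin n), w σ₂ * (P σ₁ * w σ₃ - w σ₁ * P σ₃)
      = w σ₂ * (P σ₁ - w σ₁ * ∑ σ : Equiv.Perm (Fin n), P σ) := by
    intro σ₁
    rw [← Finset.mul_sum, Finset.sum_sub_distrib, ← Finset.mul_sum, ← Finset.mul_sum, hw,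
      mul_one]
  simp only [h3]
  rw [← Finset.mul_sum, Finset.sum_sub_distrib, ← Finset.sum_mul, hw, one_mul, sub_self,
    mul_zero]

lemma sum_perm_apply {m : ℕ} (k : Fin m) (g : Fin m → ℝ) (hg : ∑ p : Fin m, g p = 0) :
    ∑ π : Equiv.Perm (Fin m), g (π k) = 0 := by
  have hpos : 0 < m := k.pos
  obtain ⟨m', rfl⟩ : ∃ m', m = m' + 1 := ⟨m - 1, by omega⟩
  have h1 : ∑ π : Equiv.Perm (Fin (m' + 1)), g (π k)
      = ∑ π : Equiv.Perm (Fin (m' + 1)), g (π 0) := by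
    have := Equiv.sum_comp (Equiv.mulRight (Equiv.swap (0 : Fin (m' + 1)) k))
      (fun π : Equiv.Perm (Fin (m' + 1)) => g (π 0))
    simpa [Equiv.Perm.mul_apply, Equiv.swap_apply_left] using this
  rw [h1, ← Equiv.sum_comp (Equiv.Perm.decomposeFin.symm)
    (fun π : Equiv.Perm (Fin (m' + 1)) => g (π 0)), Fintype.sum_prod_type]
  simp only [Equiv.Perm.decomposeFin_symm_apply_zero, Finset.sum_const]
  rw [← Finset.smul_sum, hg, smul_zero]



/-- Under the null-hypothesis model, the expected average spread of experiment
E3 is zero: each of the `m = n(n-1)/2` subjects has its own ranking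
distribution `r k`, subjects are assigned to comparison-position pairs
(enumerated by the bijection `e`) by a uniformly random permutation `π` of
`Fin m`, and each subject's three rankings are i.i.d. samples from its own
distribution. -/
theorem expected_average_spread_E3_eq_zero (n m : ℕ) (hn : 2 ≤ n)
    (hm : m = n * (n - 1) / 2)
    (e : Fin m ≃ {p : Fin n × Fin n // p.1 < p.2})
    (r : Fin m → Equiv.Perm (Fin n) → ℝ)
    (hr_nonneg : ∀ k σ, 0 ≤ r k σ)
    (hr_sum : ∀ k, ∑ σ : Equiv.Perm (Fin n), r k σ = 1) :
    (1 / (Nat.factorial m : ℝ)) *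
      ∑ π : Equiv.Perm (Fin m),
        (1 / (m : ℝ)) * ∑ k : Fin m,
          ∑ σ₁ : Equiv.Perm (Fin n), ∑ σ₂ : Equiv.Perm (Fin n), ∑ σ₃ : Equiv.Perm (Fin n),
            r k σ₁ * r k σ₂ * r k σ₃ *
              ((posSpread (e (π k)).1.1 (e (π k)).1.2 σ₁ σ₂ σ₃ : ℤ) : ℝ) = 0 := by
  have hF : ∀ k : Fin m, ∑ p : Fin m,
      (∑ σ₁ : Equiv.Perm (Fin n), ∑ σ₂ : Equiv.Perm (Fin n), ∑ σ₃ : Equiv.Perm (Fin n),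
        r k σ₁ * r k σ₂ * r k σ₃ *
          ((posSpread (e p).1.1 (e p).1.2 σ₁ σ₂ σ₃ : ℤ) : ℝ)) = 0 := by
    intro k
    rw [Fintype.sum_equiv e _
      (fun q : {p : Fin n × Fin n // p.1 < p.2} =>
        ∑ σ₁ : Equiv.Perm (Fin n), ∑ σ₂ : Equiv.Perm (Fin n), ∑ σ₃ : Equiv.Perm (Fin n),
          r k σ₁ * r k σ₂ * r k σ₃ * ((posSpread q.1.1 q.1.2 σ₁ σ₂ σ₃ : ℤ) : ℝ))
      (fun p => rfl)]
    exact key (r k) (hr_sum k)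
  have hmain : ∑ π : Equiv.Perm (Fin m), ∑ k : Fin m,
      (∑ σ₁ : Equiv.Perm (Fin n), ∑ σ₂ : Equiv.Perm (Fin n), ∑ σ₃ : Equiv.Perm (Fin n),
        r k σ₁ * r k σ₂ * r k σ₃ *
          ((posSpread (e (π k)).1.1 (e (π k)).1.2 σ₁ σ₂ σ₃ : ℤ) : ℝ)) = 0 := by
    rw [Finset.sum_comm]
    exact Finset.sum_eq_zero fun k _ => sum_perm_apply k _ (hF k)
  rw [← Finset.mul_sum, hmain, mul_zero, mul_zero]
end

section
/- Summing over all comparison-position pairs, the expected spreads of a single subject under the null-hypothesis model cancel exactly: for every n ≥ 2 and every ranking distribution r on the permutations of Fin n, ∑_{1 ≤ i < j ≤ n} ∑_{σ₁,σ₂,σ₃ ∈ S_n} r(σ₁)·r(σ₂)·r(σ₃)·spread_{i,j}(σ₁,σ₂,σ₃) = 0; hence pairs (i, j) for which the expected spread is positive must be balanced by pairs for which it is negative. -/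
/-- symmetric pairwise kernel -/
def hfun {n : ℕ} (σ₁ σ₂ σ₃ : Equiv.Perm (Fin n)) (a b : Fin n) : ℤ :=
  if σ₂ a < σ₂ b then (((σ₁ a).val : ℤ) - ((σ₃ a).val : ℤ)) + (((σ₃ b).val : ℤ) - ((σ₁ b).val : ℤ))
  else (((σ₁ b).val : ℤ) - ((σ₃ b).val : ℤ)) + (((σ₃ a).val : ℤ) - ((σ₁ a).val : ℤ))

lemma posSpread_eq {n : ℕ} (i j : Fin n) (σ₁ σ₂ σ₃ : Equiv.Perm (Fin n)) :
    posSpread i j σ₁ σ₂ σ₃ = hfun σ₁ σ₂ σ₃ (σ₁⁻¹ i) (σ₁⁻¹ j) := by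
  unfold posSpread hfun
  split_ifs with h <;> simp only [Equiv.Perm.inv_def] at h <;> simp [h]

lemma hfun_symm {n : ℕ} (σ₁ σ₂ σ₃ : Equiv.Perm (Fin n)) {a b : Fin n} (hab : a ≠ b) :
    hfun σ₁ σ₂ σ₃ a b = hfun σ₁ σ₂ σ₃ b a := by
  have hne : σ₂ a ≠ σ₂ b := fun h => hab (σ₂.injective h)
  unfold hfun
  rcases lt_or_gt_of_ne hne with h | h
  · rw [if_pos h, if_neg (not_lt.mpr h.le)]
  · rw [if_neg (not_lt.mpr h.le), if_pos h]

lemma hfun_anti {n : ℕ} (σ₁ σ₂ σ₃ : Equiv.Perm (Fin n)) (a b : Fin n) :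
    hfun σ₃ σ₂ σ₁ a b = - hfun σ₁ σ₂ σ₃ a b := by
  unfold hfun
  split_ifs <;> ring

lemma sum_pairs_reindex {n : ℕ} (π : Equiv.Perm (Fin n)) (f : Fin n → Fin n → ℤ)
    (hf : ∀ a b, a ≠ b → f a b = f b a) :
    ∑ p ∈ Finset.univ.filter (fun p : Fin n × Fin n => p.1 < p.2), f (π p.1) (π p.2)
      = ∑ p ∈ Finset.univ.filter (fun p : Fin n × Fin n => p.1 < p.2), f p.1 p.2 := by
  refine Finset.sum_nbij'
    (fun p => if π p.1 < π p.2 then (π p.1, π p.2) else (π p.2, π p.1))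
    (fun p => if π⁻¹ p.1 < π⁻¹ p.2 then (π⁻¹ p.1, π⁻¹ p.2) else (π⁻¹ p.2, π⁻¹ p.1))
    ?_ ?_ ?_ ?_ ?_
  · intro p hp
    simp only [Finset.mem_filter, Finset.mem_univ, true_and] at hp ⊢
    have hne : π p.1 ≠ π p.2 := fun h => absurd (π.injective h) (ne_of_lt hp)
    rcases lt_or_gt_of_ne hne with h | h
    · rw [if_pos h]; exact h
    · rw [if_neg (not_lt.mpr h.le)]; exact h
  · intro p hp
    simp only [Finset.mem_filter, Finset.mem_univ, true_and] at hp ⊢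
    have hne : π⁻¹ p.1 ≠ π⁻¹ p.2 := fun h => absurd (π⁻¹.injective h) (ne_of_lt hp)
    rcases lt_or_gt_of_ne hne with h | h
    · rw [if_pos h]; exact h
    · rw [if_neg (not_lt.mpr h.le)]; exact h
  · intro p hp
    simp only [Finset.mem_filter, Finset.mem_univ, true_and] at hp
    have hne : π p.1 ≠ π p.2 := fun h => absurd (π.injective h) (ne_of_lt hp)
    rcases lt_or_gt_of_ne hne with h | h
    · rw [if_pos h]
      simp only [Equiv.Perm.inv_def, Equiv.symm_apply_apply]
      rw [if_pos hp]
    · rw [if_neg (not_lt.mpr h.le)]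
      simp only [Equiv.Perm.inv_def, Equiv.symm_apply_apply]
      rw [if_neg (not_lt.mpr hp.le)]
  · intro p hp
    simp only [Finset.mem_filter, Finset.mem_univ, true_and] at hp
    have hne : π⁻¹ p.1 ≠ π⁻¹ p.2 := fun h => absurd (π⁻¹.injective h) (ne_of_lt hp)
    rcases lt_or_gt_of_ne hne with h | h
    · rw [if_pos h]
      simp only [Equiv.Perm.inv_def, Equiv.apply_symm_apply]
      rw [if_pos hp]
    · rw [if_neg (not_lt.mpr h.le)]
      simp only [Equiv.Perm.inv_def, Equiv.apply_symm_apply]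
      rw [if_neg (not_lt.mpr hp.le)]
  · intro p hp
    simp only [Finset.mem_filter, Finset.mem_univ, true_and] at hp
    have hne : π p.1 ≠ π p.2 := fun h => absurd (π.injective h) (ne_of_lt hp)
    rcases lt_or_gt_of_ne hne with h | h
    · rw [if_pos h]
    · rw [if_neg (not_lt.mpr h.le)]
      exact hf _ _ hne

lemma sum_posSpread_eq {n : ℕ} (σ₁ σ₂ σ₃ : Equiv.Perm (Fin n)) :
    ∑ p ∈ Finset.univ.filter (fun p : Fin n × Fin n => p.1 < p.2), posSpread p.1 p.2 σ₁ σ₂ σ₃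
      = ∑ p ∈ Finset.univ.filter (fun p : Fin n × Fin n => p.1 < p.2), hfun σ₁ σ₂ σ₃ p.1 p.2 := by
  rw [← sum_pairs_reindex σ₁⁻¹ (hfun σ₁ σ₂ σ₃) (fun a b hab => hfun_symm σ₁ σ₂ σ₃ hab)]
  exact Finset.sum_congr rfl fun p _ => posSpread_eq p.1 p.2 σ₁ σ₂ σ₃

lemma sum_posSpread_anti {n : ℕ} (σ₁ σ₂ σ₃ : Equiv.Perm (Fin n)) :
    ∑ p ∈ Finset.univ.filter (fun p : Fin n × Fin n => p.1 < p.2), posSpread p.1 p.2 σ₃ σ₂ σ₁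
      = - ∑ p ∈ Finset.univ.filter (fun p : Fin n × Fin n => p.1 < p.2), posSpread p.1 p.2 σ₁ σ₂ σ₃ := by
  rw [sum_posSpread_eq, sum_posSpread_eq, ← Finset.sum_neg_distrib]
  exact Finset.sum_congr rfl fun p _ => hfun_anti σ₁ σ₂ σ₃ p.1 p.2

/-- Summing over all comparison-position pairs, the expected spreads of a
single subject under the null-hypothesis model cancel exactly: pairs with
positive expected spread must be balanced by pairs with negative expected
spread. -/
theorem sum_expected_spreads_eq_zero (n : ℕ) (hn : 2 ≤ n)
    (r : Equiv.Perm (Fin n) → ℝ)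
    (hr_nonneg : ∀ σ, 0 ≤ r σ) (hr_sum : ∑ σ : Equiv.Perm (Fin n), r σ = 1) :
    ∑ p ∈ Finset.univ.filter (fun p : Fin n × Fin n => p.1 < p.2),
      ∑ σ₁ : Equiv.Perm (Fin n), ∑ σ₂ : Equiv.Perm (Fin n), ∑ σ₃ : Equiv.Perm (Fin n),
        r σ₁ * r σ₂ * r σ₃ * ((posSpread p.1 p.2 σ₁ σ₂ σ₃ : ℤ) : ℝ) = 0 := by
  set S := Finset.univ.filter (fun p : Fin n × Fin n => p.1 < p.2) with hS
  set f : Equiv.Perm (Fin n) → Equiv.Perm (Fin n) → Equiv.Perm (Fin n) → ℝ :=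
    fun σ₁ σ₂ σ₃ => r σ₁ * r σ₂ * r σ₃ * ((∑ p ∈ S, posSpread p.1 p.2 σ₁ σ₂ σ₃ : ℤ) : ℝ) with hf
  have hA : ∑ p ∈ S, ∑ σ₁ : Equiv.Perm (Fin n), ∑ σ₂ : Equiv.Perm (Fin n), ∑ σ₃ : Equiv.Perm (Fin n),
      r σ₁ * r σ₂ * r σ₃ * ((posSpread p.1 p.2 σ₁ σ₂ σ₃ : ℤ) : ℝ)
      = ∑ σ₁ : Equiv.Perm (Fin n), ∑ σ₂ : Equiv.Perm (Fin n), ∑ σ₃ : Equiv.Perm (Fin n), f σ₁ σ₂ σ₃ := by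
    rw [Finset.sum_comm]
    refine Finset.sum_congr rfl fun σ₁ _ => ?_
    rw [Finset.sum_comm]
    refine Finset.sum_congr rfl fun σ₂ _ => ?_
    rw [Finset.sum_comm]
    refine Finset.sum_congr rfl fun σ₃ _ => ?_
    rw [hf]
    push_cast
    rw [Finset.mul_sum]
  rw [hA]
  have comm3 : ∀ g : Equiv.Perm (Fin n) → Equiv.Perm (Fin n) → Equiv.Perm (Fin n) → ℝ,
      ∑ a : Equiv.Perm (Fin n), ∑ b : Equiv.Perm (Fin n), ∑ c : Equiv.Perm (Fin n), g a b c
        = ∑ c : Equiv.Perm (Fin n), ∑ b : Equiv.Perm (Fin n), ∑ a : Equiv.Perm (Fin n), g a b c := by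
    intro g
    calc ∑ a : Equiv.Perm (Fin n), ∑ b : Equiv.Perm (Fin n), ∑ c : Equiv.Perm (Fin n), g a b c
        = ∑ b : Equiv.Perm (Fin n), ∑ a : Equiv.Perm (Fin n), ∑ c : Equiv.Perm (Fin n), g a b c :=
          Finset.sum_comm
      _ = ∑ b : Equiv.Perm (Fin n), ∑ c : Equiv.Perm (Fin n), ∑ a : Equiv.Perm (Fin n), g a b c :=
          Finset.sum_congr rfl fun b _ => Finset.sum_comm
      _ = ∑ c : Equiv.Perm (Fin n), ∑ b : Equiv.Perm (Fin n), ∑ a : Equiv.Perm (Fin n), g a b c :=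
          Finset.sum_comm
  have hneg : ∑ σ₁ : Equiv.Perm (Fin n), ∑ σ₂ : Equiv.Perm (Fin n), ∑ σ₃ : Equiv.Perm (Fin n), f σ₁ σ₂ σ₃
      = - ∑ σ₁ : Equiv.Perm (Fin n), ∑ σ₂ : Equiv.Perm (Fin n), ∑ σ₃ : Equiv.Perm (Fin n), f σ₁ σ₂ σ₃ := by
    conv_lhs => rw [comm3 f]
    rw [← Finset.sum_neg_distrib]
    refine Finset.sum_congr rfl fun a _ => ?_
    rw [← Finset.sum_neg_distrib]
    refine Finset.sum_congr rfl fun b _ => ?_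
    rw [← Finset.sum_neg_distrib]
    refine Finset.sum_congr rfl fun c _ => ?_
    rw [hf]
    dsimp only
    rw [sum_posSpread_anti c b a]
    push_cast
    ring
  linarith
end
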